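/- Let R be a regular expression, D a graph database, and s, t vertices of D. If w is a walk from s to t of minimal length among all walks from s to t whose label set meets L(R), then w belongs to the binding-trail semantics ⟦R⟧_BT(D): there is a binding trail of D matching R whose underlying walk is w. -/

import Mathlib

structure GraphDB (σ V E : Type) where
  src : E → V
  tgt : E → V
  lbl : E → Set σ

inductive GraphDB.IsWalkFrom {σ V E : Type} (D : GraphDB σ V E) : V → List E → V → Prop
  | nil (v : V) : D.IsWalkFrom v [] v
  | cons {v u t : V} {e : E} {es : List E} :
      D.src e = v → D.tgt e = u → D.IsWalkFrom u es t → D.IsWalkFrom v (e :: es) t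

/-- The list of vertices visited by a walk starting at `s` with edge list `es`. -/
def GraphDB.walkVertices {σ V E : Type} (D : GraphDB σ V E) (s : V) (es : List E) : List V :=
  s :: es.map D.tgt

/-- `w` is one of the label words of the walk with edges `es`. -/
def GraphDB.WalkLabel {σ V E : Type} (D : GraphDB σ V E) (es : List E) (w : List σ) : Prop :=
  List.Forall₂ (fun a e => a ∈ D.lbl e) w es

structure Auto (σ Q : Type) where
  Δ : Set (Q × σ × Q)
  I : Set Q
  F : Set Q

inductive Auto.IsComp {σ Q : Type} (A : Auto σ Q) : Q → List σ → Q → Prop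
  | nil (q : Q) : A.IsComp q [] q
  | cons {q q' t : Q} {a : σ} {w : List σ} :
      (q, a, q') ∈ A.Δ → A.IsComp q' w t → A.IsComp q (a :: w) t

def Auto.Accepts {σ Q : Type} (A : Auto σ Q) (w : List σ) : Prop :=
  ∃ i ∈ A.I, ∃ f ∈ A.F, A.IsComp i w f

/-- Edges of the product (run) database `D × A`. -/
def ProdEdge {σ V E Q : Type} (D : GraphDB σ V E) (A : Auto σ Q) : Type :=
  { p : E × (Q × σ × Q) // p.2 ∈ A.Δ ∧ p.2.2.1 ∈ D.lbl p.1 }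

/-- The product (run) database `D × A`. -/
def prodDB {σ V E Q : Type} (D : GraphDB σ V E) (A : Auto σ Q) :
    GraphDB σ (V × Q) (ProdEdge D A) where
  src p := (D.src p.1.1, p.1.2.1)
  tgt p := (D.tgt p.1.1, p.1.2.2.2)
  lbl p := {p.1.2.2.1}

/-- A run: a walk of `D × A` from `V × I` to `V × F`. -/
def IsRun {σ V E Q : Type} (D : GraphDB σ V E) (A : Auto σ Q)
    (p : V × Q) (es : List (ProdEdge D A)) (q : V × Q) : Prop :=
  (prodDB D A).IsWalkFrom p es q ∧ p.2 ∈ A.I ∧ q.2 ∈ A.F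

/-- A walk is simple if it repeats no vertex. -/
def IsSimple {σ V E : Type} (D : GraphDB σ V E) (s : V) (es : List E) : Prop :=
  (D.walkVertices s es).Nodup

/-- Projection of product edges to edges of `D`. -/
def projEdges {σ V E Q : Type} {D : GraphDB σ V E} {A : Auto σ Q}
    (es : List (ProdEdge D A)) : List E := es.map (fun p => p.1.1)

/-- Membership in the simple-run semantics `⟦A⟧_SR(D)`:
the walk `(s, es, t)` is the projection of some simple run of `D × A`. -/
def InSR {σ V E Q : Type} (D : GraphDB σ V E) (A : Auto σ Q)
    (s : V) (es : List E) (t : V) : Prop :=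
  ∃ (i f : Q) (r : List (ProdEdge D A)),
    IsRun D A (s, i) r (t, f) ∧ IsSimple (prodDB D A) (s, i) r ∧ projEdges r = es

open RegularExpression

/-- Number of occurrences of the letter `b` in a regular expression. -/
def charCount {β : Type} [DecidableEq β] (b : β) : RegularExpression β → ℕ
  | RegularExpression.zero => 0
  | RegularExpression.epsilon => 0
  | RegularExpression.char c => if c = b then 1 else 0
  | RegularExpression.plus p q => charCount b p + charCount b q
  | RegularExpression.comp p q => charCount b p + charCount b q
  | RegularExpression.star p => charCount b p

/-- A linearised expression: each position occurs at most once. -/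
def Linear {Γ : Type} [DecidableEq Γ] (R' : RegularExpression Γ) : Prop :=
  ∀ γ : Γ, charCount γ R' ≤ 1

/-- Transitions of the Glushkov automaton of a linearised expression `R'` over the
positions `Γ`, with underlying-letter map `bar : Γ → σ`; states are `Option Γ`,
`none` being the initial state `init`. -/
def GlDelta {σ Γ : Type} (bar : Γ → σ) (R' : RegularExpression Γ) :
    Set (Option Γ × σ × Option Γ) :=
  {t | (∃ (α β : Γ) (u v : List Γ), t = (some α, bar β, some β) ∧
          u ++ α :: β :: v ∈ R'.matches') ∨
       (∃ (α : Γ) (u : List Γ), t = (none, bar α, some α) ∧ α :: u ∈ R'.matches')}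

/-- Final states of the Glushkov automaton. -/
def GlFinal {Γ : Type} (R' : RegularExpression Γ) : Set (Option Γ) :=
  {q | (∃ (α : Γ) (u : List Γ), q = some α ∧ u ++ [α] ∈ R'.matches') ∨
       (q = none ∧ [] ∈ R'.matches')}

/-- A binding trail of `D` matching `R` (given via its linearisation `R'`),
from `s` to `t`. -/
def BindingTrail {σ V E Γ : Type} (D : GraphDB σ V E) (bar : Γ → σ)
    (R' : RegularExpression Γ) (s : V) (l : List (E × Γ)) (t : V) : Prop :=
  D.IsWalkFrom s (l.map Prod.fst) t ∧
  (∀ p ∈ l, bar p.2 ∈ D.lbl p.1) ∧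
  (l.map Prod.snd) ∈ R'.matches' ∧
  l.Nodup

namespace Stmt12Aux

open RegularExpression

variable {Γ : Type} [DecidableEq Γ]

lemma charCount_pos_of_mem : ∀ (R : RegularExpression Γ) {w : List Γ} {α : Γ},
    w ∈ R.matches' → α ∈ w → 1 ≤ charCount α R := by
  intro R
  induction R with
  | zero => intro w α hw _; exact absurd hw (by simp [matches'_zero])
  | epsilon =>
      intro w α hw hα
      have hw' : w = [] := hw
      subst hw'; simp at hα
  | char c =>
      intro w α hw hα
      have hw' : w = [c] := hw
      subst hw'
      simp at hα; subst hα
      simp [charCount]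
  | plus p q ihp ihq =>
      intro w α hw hα
      have hc : charCount α (RegularExpression.plus p q)
          = charCount α p + charCount α q := rfl
      rw [hc]
      rcases hw with h | h
      · have := ihp h hα; omega
      · have := ihq h hα; omega
  | comp p q ihp ihq =>
      intro w α hw hα
      have hc : charCount α (RegularExpression.comp p q)
          = charCount α p + charCount α q := rfl
      rw [hc]
      rcases Language.mem_mul.mp hw with ⟨x, hx, y, hy, hxy⟩
      subst hxy
      rcases List.mem_append.mp hα with h | h
      · have := ihp hx h; omega
      · have := ihq hy h; omega
  | star p ihp =>
      intro w α hw hα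
      have hc : charCount α (RegularExpression.star p) = charCount α p := rfl
      rw [hc]
      rcases Language.mem_kstar.mp hw with ⟨L, rfl, hL⟩
      rcases List.mem_flatten.mp hα with ⟨y, hy, hαy⟩
      exact ihp (hL y hy) hαy

lemma flatten_split {S : List (List Γ)} {u v : List Γ} {α : Γ}
    (h : S.flatten = u ++ α :: v) :
    ∃ (S1 : List (List Γ)) (a b : List Γ) (S2 : List (List Γ)),
      S = S1 ++ (a ++ α :: b) :: S2 ∧ u = S1.flatten ++ a ∧ v = b ++ S2.flatten := by
  induction S generalizing u with
  | nil => simp at h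
  | cons x S ih =>
      rw [List.flatten_cons] at h
      rcases List.append_eq_append_iff.mp h with ⟨a', hu, hy⟩ | ⟨c', hx, hv⟩
      · obtain ⟨S1, a, b, S2, rfl, rfl, rfl⟩ := ih hy
        exact ⟨x :: S1, a, b, S2, rfl, by simp [hu], rfl⟩
      · cases c' with
        | nil =>
            have hx' : x = u := by simpa using hx
            have hv' : S.flatten = [] ++ α :: v := by simpa using hv.symm
            obtain ⟨S1, a, b, S2, rfl, h1, rfl⟩ := ih hv'
            obtain ⟨h2, h3⟩ := List.append_eq_nil_iff.mp h1.symm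
            exact ⟨x :: S1, [], b, S2, by simp [h3], by simp [hx', h2], rfl⟩
        | cons γ c'' =>
            have hγ : γ = α ∧ v = c'' ++ S.flatten := by
              have := hv
              simp at this
              exact ⟨this.1.symm, this.2⟩
            obtain ⟨rfl, rfl⟩ := hγ
            exact ⟨[], u, c'', S, by simp [hx], by simp, rfl⟩

lemma mul_split {L M : Language Γ} {u v : List Γ} {α : Γ} (h : u ++ α :: v ∈ L * M) :
    (∃ v₁ y, u ++ α :: v₁ ∈ L ∧ y ∈ M ∧ v = v₁ ++ y) ∨
    (∃ u₁ x, x ∈ L ∧ u₁ ++ α :: v ∈ M ∧ u = x ++ u₁) := by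
  rcases Language.mem_mul.mp h with ⟨x, hx, y, hy, hxy⟩
  rcases List.append_eq_append_iff.mp hxy with ⟨a', hu, hy'⟩ | ⟨c', hx', hv⟩
  · exact Or.inr ⟨a', x, hx, hy' ▸ hy, hu⟩
  · cases c' with
    | nil =>
        simp at hx' hv
        exact Or.inr ⟨[], x, hx, by simpa [← hv] using hy, by simp [hx']⟩
    | cons γ c'' =>
        have : γ = α ∧ v = c'' ++ y := by simp at hv; exact ⟨hv.1.symm, hv.2⟩
        obtain ⟨rfl, rfl⟩ := this
        exact Or.inl ⟨c'', y, hx' ▸ hx, hy, rfl⟩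

lemma swap : ∀ (R : RegularExpression Γ), Linear R → ∀ {α : Γ} {u v u' v' : List Γ},
    u ++ α :: v ∈ R.matches' → u' ++ α :: v' ∈ R.matches' → u ++ α :: v' ∈ R.matches' := by
  intro R
  induction R with
  | zero => intro _ α u v u' v' h1 _; exact absurd h1 (by simp [matches'_zero])
  | epsilon =>
      intro _ α u v u' v' h1 _
      have h1' : u ++ α :: v = [] := h1
      simp at h1'
  | char c =>
      intro _ α u v u' v' h1 h2
      have h1' : u ++ α :: v = [c] := h1
      have h2' : u' ++ α :: v' = [c] := h2
      show u ++ α :: v' = [c]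
      cases u with
      | cons a u => simp at h1'
      | nil =>
          cases u' with
          | cons a u' => simp at h2'
          | nil =>
              simp at h1' h2'
              simp [h1'.1, h2'.2]
  | plus p q ihp ihq =>
      intro hlin α u v u' v' h1 h2
      have hcc : charCount α p + charCount α q ≤ 1 := hlin α
      have hlp : Linear p := fun γ => by have := hlin γ
                                         have : charCount γ p + charCount γ q ≤ 1 := this
                                         omega
      have hlq : Linear q := fun γ => by have := hlin γ
                                         have : charCount γ p + charCount γ q ≤ 1 := this
                                         omega
      rcases h1 with h1 | h1 <;> rcases h2 with h2 | h2
      · exact Or.inl (ihp hlp h1 h2)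
      · have c1 := charCount_pos_of_mem p (α := α) h1 (by simp)
        have c2 := charCount_pos_of_mem q (α := α) h2 (by simp)
        omega
      · have c1 := charCount_pos_of_mem q (α := α) h1 (by simp)
        have c2 := charCount_pos_of_mem p (α := α) h2 (by simp)
        omega
      · exact Or.inr (ihq hlq h1 h2)
  | comp p q ihp ihq =>
      intro hlin α u v u' v' h1 h2
      have hcc : charCount α p + charCount α q ≤ 1 := hlin α
      have hlp : Linear p := fun γ => by have : charCount γ p + charCount γ q ≤ 1 := hlin γ
                                         omega
      have hlq : Linear q := fun γ => by have : charCount γ p + charCount γ q ≤ 1 := hlin γ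
                                         omega
      have h1' : u ++ α :: v ∈ p.matches' * q.matches' := h1
      have h2' : u' ++ α :: v' ∈ p.matches' * q.matches' := h2
      show u ++ α :: v' ∈ p.matches' * q.matches'
      rcases mul_split h1' with ⟨v₁, y, hpv, hqy, rfl⟩ | ⟨u₁, x, hpx, hqv, rfl⟩ <;>
        rcases mul_split h2' with ⟨v₁', y', hpv', hqy', rfl⟩ | ⟨u₁', x', hpx', hqv', rfl⟩
      · have := ihp hlp hpv hpv'
        have : (u ++ α :: v₁') ++ y' ∈ p.matches' * q.matches' :=
          Language.append_mem_mul this hqy'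
        simpa using this
      · have c1 := charCount_pos_of_mem p (α := α) hpv (by simp)
        have c2 := charCount_pos_of_mem q (α := α) hqv' (by simp)
        omega
      · have c1 := charCount_pos_of_mem q (α := α) hqv (by simp)
        have c2 := charCount_pos_of_mem p (α := α) hpv' (by simp)
        omega
      · have := ihq hlq hqv hqv'
        have : x ++ (u₁ ++ α :: v') ∈ p.matches' * q.matches' :=
          Language.append_mem_mul hpx this
        simpa using this
  | star p ihp =>
      intro hlin α u v u' v' h1 h2
      have hlp : Linear p := fun γ => by
        have : charCount γ (RegularExpression.star p) = charCount γ p := rfl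
        have := hlin γ; omega
      have h1' : u ++ α :: v ∈ KStar.kstar p.matches' := h1
      have h2' : u' ++ α :: v' ∈ KStar.kstar p.matches' := h2
      show u ++ α :: v' ∈ KStar.kstar p.matches'
      rcases Language.mem_kstar.mp h1' with ⟨S, hS, hSm⟩
      rcases Language.mem_kstar.mp h2' with ⟨T, hT, hTm⟩
      obtain ⟨S1, a, b, S2, rfl, rfl, rfl⟩ := flatten_split hS.symm
      obtain ⟨T1, c, d, T2, rfl, rfl, rfl⟩ := flatten_split hT.symm
      have hp1 : a ++ α :: b ∈ p.matches' := hSm _ (by simp)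
      have hp2 : c ++ α :: d ∈ p.matches' := hTm _ (by simp)
      have hp3 : a ++ α :: d ∈ p.matches' := ihp hlp hp1 hp2
      have : (S1 ++ (a ++ α :: d) :: T2).flatten ∈ KStar.kstar p.matches' := by
        apply Language.join_mem_kstar
        intro y hy
        rcases List.mem_append.mp hy with hy | hy
        · exact hSm _ (List.mem_append_left _ hy)
        · rcases List.mem_cons.mp hy with rfl | hy
          · exact hp3
          · exact hTm _ (by simp [hy])
      simpa using this

lemma delete {R : RegularExpression Γ} (hlin : Linear R) {α : Γ} {u v w : List Γ}
    (h : u ++ α :: (v ++ α :: w) ∈ R.matches') : u ++ α :: w ∈ R.matches' := by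
  have h2 : (u ++ α :: v) ++ α :: w ∈ R.matches' := by simpa using h
  exact swap R hlin h h2

section Walk
variable {σ V E : Type} {D : GraphDB σ V E}

lemma walk_cons_inv {s t : V} {e : E} {es : List E}
    (h : D.IsWalkFrom s (e :: es) t) : D.src e = s ∧ D.IsWalkFrom (D.tgt e) es t := by
  cases h with
  | cons h1 h2 h3 => exact ⟨h1, h2 ▸ h3⟩

lemma walk_append {s m t : V} {xs ys : List E}
    (h1 : D.IsWalkFrom s xs m) (h2 : D.IsWalkFrom m ys t) :
    D.IsWalkFrom s (xs ++ ys) t := by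
  induction h1 with
  | nil => exact h2
  | cons ha hb _ ih => exact GraphDB.IsWalkFrom.cons ha hb (ih h2)

lemma walk_append_inv {s t : V} {xs ys : List E}
    (h : D.IsWalkFrom s (xs ++ ys) t) :
    ∃ m, D.IsWalkFrom s xs m ∧ D.IsWalkFrom m ys t := by
  induction xs generalizing s with
  | nil => exact ⟨s, GraphDB.IsWalkFrom.nil s, h⟩
  | cons e es ih =>
      obtain ⟨he, h'⟩ := walk_cons_inv h
      obtain ⟨m, hm1, hm2⟩ := ih h'
      exact ⟨m, GraphDB.IsWalkFrom.cons he rfl hm1, hm2⟩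

lemma walk_shorten {s t : V} {p1 p2 p3 : List E} {e : E}
    (h : D.IsWalkFrom s (p1 ++ e :: p2 ++ e :: p3) t) :
    D.IsWalkFrom s (p1 ++ e :: p3) t := by
  obtain ⟨m1, h1, h2⟩ := walk_append_inv h
  obtain ⟨m0, h3, h4⟩ := walk_append_inv h1
  obtain ⟨he, _⟩ := walk_cons_inv h4
  obtain ⟨he2, h6⟩ := walk_cons_inv h2
  exact walk_append h3 (GraphDB.IsWalkFrom.cons he rfl h6)

lemma forall2_label (bar : Γ → σ) : ∀ (l : List (E × Γ)),
    (∀ p ∈ l, bar p.2 ∈ D.lbl p.1) →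
    D.WalkLabel (l.map Prod.fst) ((l.map Prod.snd).map bar) := by
  intro l
  induction l with
  | nil => intro _; exact List.Forall₂.nil
  | cons p l ih =>
      intro h
      exact List.Forall₂.cons (h p (by simp)) (ih (fun q hq => h q (by simp [hq])))

lemma label_of_forall2 (bar : Γ → σ) : ∀ (es : List E) (g : List Γ),
    D.WalkLabel es (g.map bar) → ∀ p ∈ es.zip g, bar p.2 ∈ D.lbl p.1 := by
  intro es
  induction es with
  | nil => intro g _ p hp; simp at hp
  | cons e es ih =>
      intro g h p hp
      cases g with
      | nil => simp at hp
      | cons γ g =>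
          cases h with
          | cons h1 h2 =>
              rcases List.mem_cons.mp hp with rfl | hp
              · exact h1
              · exact ih g h2 p hp

end Walk

lemma nodup_or_split {β : Type} : ∀ (l : List β),
    l.Nodup ∨ ∃ (x : β) (l1 l2 l3 : List β), l = l1 ++ x :: l2 ++ x :: l3 := by
  intro l
  induction l with
  | nil => exact Or.inl List.nodup_nil
  | cons a l ih =>
      by_cases ha : a ∈ l
      · obtain ⟨l2, l3, rfl⟩ := List.append_of_mem ha
        exact Or.inr ⟨a, [], l2, l3, rfl⟩
      · rcases ih with h | ⟨x, l1, l2, l3, rfl⟩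
        · exact Or.inl (List.nodup_cons.mpr ⟨ha, h⟩)
        · exact Or.inr ⟨x, a :: l1, l2, l3, rfl⟩

end Stmt12Aux

/-- any walk from `s` to `t` of minimal length among those whose
label set meets `L(R)` is the underlying walk of a binding trail matching `R`. -/
theorem stmt_12 {σ V E Γ : Type} [DecidableEq Γ] (D : GraphDB σ V E)
    (bar : Γ → σ) (R' : RegularExpression Γ) (hlin : Linear R')
    (s t : V) (es : List E)
    (hw : D.IsWalkFrom s es t)
    (hm : ∃ w : List σ, D.WalkLabel es w ∧ w ∈ (R'.map bar).matches')
    (hmin : ∀ es' : List E, D.IsWalkFrom s es' t →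
      (∃ w : List σ, D.WalkLabel es' w ∧ w ∈ (R'.map bar).matches') →
      es.length ≤ es'.length) :
    ∃ l : List (E × Γ), BindingTrail D bar R' s l t ∧ l.map Prod.fst = es := by
  classical
  open Stmt12Aux in
  obtain ⟨w, hwl, hwm⟩ := hm
  rw [RegularExpression.matches'_map] at hwm
  obtain ⟨g, hg, rfl⟩ := hwm
  have hlen : es.length = g.length := by
    have h := hwl.length_eq
    simpa using h.symm
  have hfst : (es.zip g).map Prod.fst = es := List.map_fst_zip (le_of_eq hlen)
  have hsnd : (es.zip g).map Prod.snd = g := List.map_snd_zip (ge_of_eq hlen)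
  have hlab : ∀ p ∈ es.zip g, bar p.2 ∈ D.lbl p.1 := label_of_forall2 bar es g hwl
  have hnd : (es.zip g).Nodup := by
    rcases nodup_or_split (es.zip g) with h | ⟨x, l1, l2, l3, hsplit⟩
    · exact h
    · exfalso
      have hes : es = l1.map Prod.fst ++ x.1 :: l2.map Prod.fst ++ x.1 :: l3.map Prod.fst := by
        rw [← hfst, hsplit]; simp
      have hg' : g = l1.map Prod.snd ++ x.2 :: l2.map Prod.snd ++ x.2 :: l3.map Prod.snd := by
        rw [← hsnd, hsplit]; simp
      set es'' : List E := l1.map Prod.fst ++ x.1 :: l3.map Prod.fst with hes''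
      set l'' : List (E × Γ) := l1 ++ x :: l3 with hl''
      have hw'' : D.IsWalkFrom s es'' t := walk_shorten (hes ▸ hw)
      have hmem'' : ∀ p ∈ l'', bar p.2 ∈ D.lbl p.1 := by
        intro p hp
        apply hlab
        rw [hsplit]
        rcases List.mem_append.mp hp with h | h
        · exact List.mem_append_left _ (List.mem_append_left _ h)
        · exact List.mem_append_right _ h
      have hfst'' : l''.map Prod.fst = es'' := by simp [hl'', hes'']
      have hsnd'' : l''.map Prod.snd = l1.map Prod.snd ++ x.2 :: l3.map Prod.snd := by
        simp [hl'']
      have hg'' : l''.map Prod.snd ∈ R'.matches' := by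
        rw [hsnd'']
        apply delete hlin (v := l2.map Prod.snd)
        have : l1.map Prod.snd ++ x.2 :: (l2.map Prod.snd ++ x.2 :: l3.map Prod.snd)
            ∈ R'.matches' := by
          have := hg
          rw [hg'] at this
          rw [List.append_assoc, List.cons_append] at this; exact this
        exact this
      have hword : ∃ w : List σ, D.WalkLabel es'' w ∧ w ∈ (R'.map bar).matches' := by
        refine ⟨(l''.map Prod.snd).map bar, ?_, ?_⟩
        · rw [← hfst'']
          exact forall2_label bar l'' hmem''
        · rw [RegularExpression.matches'_map]
          exact ⟨l''.map Prod.snd, hg'', rfl⟩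
      have hle := hmin es'' hw'' hword
      have h1 : es.length = l1.length + l2.length + l3.length + 2 := by
        rw [hes]; simp; omega
      have h2 : es''.length = l1.length + l3.length + 1 := by
        rw [hes'']; simp; omega
      omega
  refine ⟨es.zip g, ⟨?_, hlab, ?_, hnd⟩, hfst⟩
  · rw [hfst]; exact hw
  · rw [hsnd]; exact hg
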